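/- Let k be a commutative ring, m ≥ 0, and W a k[S_m]-module. For n ≥ m, define M(W)_n = Ind_{S_m × S_{n-m}}^{S_n} (W ⊠ k), the induced representation where S_{n-m} acts trivially on k. Then restricting from S_{n+1} to S_n gives a natural isomorphism of k[S_n]-modules: Res^{S_{n+1}}_{S_n} Ind_{S_m × S_{n+1-m}}^{S_{n+1}} (W ⊠ k) ≅ Ind_{S_m × S_{n-m}}^{S_n} (W ⊠ k) ⊕ Ind_{S_{m-1} × S_{n-m+1}}^{S_n} ((Res^{S_m}_{S_{m-1}} W) ⊠ k). -/

import Mathlib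

open Equiv

/-- The Young subgroup `S_m × S_{n-m}` of `S_n`: permutations preserving the partition
given by the predicate `i < m` on `Fin n`. -/
def young (n m : ℕ) : Subgroup (Equiv.Perm (Fin n)) where
  carrier := {σ | ∀ i : Fin n, ((σ i : ℕ) < m ↔ (i : ℕ) < m)}
  one_mem' := fun _ => Iff.rfl
  mul_mem' := by
    intro a b ha hb i
    simpa [Equiv.Perm.mul_apply] using (ha (b i)).trans (hb i)
  inv_mem' := by
    intro a ha i
    simpa using (ha (a⁻¹ i)).symm

/-- The first block `{i : Fin n | i < m}` identified with `Fin m`. -/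
def blockEquiv (n m : ℕ) (h : m ≤ n) : Fin m ≃ {i : Fin n // (i : ℕ) < m} where
  toFun i := ⟨⟨(i : ℕ), lt_of_lt_of_le i.2 h⟩, i.2⟩
  invFun j := ⟨(j.1 : ℕ), j.2⟩
  left_inv := fun i => rfl
  right_inv := fun j => rfl

/-- Projection of the Young subgroup onto the symmetric group of the first block,
`S_m × S_{n-m} → S_m`. -/
def youngToBlock (n m : ℕ) (h : m ≤ n) : ↥(young n m) →* Equiv.Perm (Fin m) where
  toFun σ := Equiv.permCongr (blockEquiv n m h).symm
    (Equiv.Perm.subtypePerm σ.1 (fun i => (σ.2 i)))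
  map_one' := Equiv.ext fun _ => rfl
  map_mul' := fun _ _ => Equiv.ext fun _ => rfl

/-- The submodule of relations defining the induced module
`Ind_H^G W = k[G] ⊗_{k[H]} W`: the span of `(g·h) ⊗ w - g ⊗ (h·w)`. -/
noncomputable def indRelations (k : Type) [CommRing k] {G : Type} [Group G] (H : Subgroup G)
    {W : Type} [AddCommGroup W] [Module k W] (ρ : Representation k (↥H) W) :
    Submodule k (G →₀ W) :=
  Submodule.span k {x | ∃ (g : G) (h : ↥H) (w : W),
    x = Finsupp.single (g * (h : G)) w - Finsupp.single g (ρ h w)}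

/-- The carrier of the induced module `Ind_H^G W`. -/
abbrev IndCar (k : Type) [CommRing k] {G : Type} [Group G] (H : Subgroup G)
    {W : Type} [AddCommGroup W] [Module k W] (ρ : Representation k (↥H) W) :=
  (G →₀ W) ⧸ indRelations k H ρ

/-- The induced representation of `G` on `Ind_H^G W`, given by left translation on the
`G`-coordinate. -/
noncomputable def indRep (k : Type) [CommRing k] {G : Type} [Group G] (H : Subgroup G)
    {W : Type} [AddCommGroup W] [Module k W] (ρ : Representation k (↥H) W) :
    Representation k G (IndCar k H ρ) where
  toFun σ := Submodule.mapQ _ _ (Finsupp.lmapDomain W k (fun g => σ * g)) (by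
    rw [indRelations, Submodule.span_le]
    rintro x ⟨g, h, w, rfl⟩
    simp only [SetLike.mem_coe, Submodule.mem_comap, map_sub, Finsupp.lmapDomain_apply,
      Finsupp.mapDomain_single]
    exact Submodule.subset_span ⟨σ * g, h, w, by rw [mul_assoc]⟩)
  map_one' := by
    refine LinearMap.ext fun x => ?_
    obtain ⟨y, rfl⟩ := Submodule.Quotient.mk_surjective _ x
    simp only [Submodule.mapQ_apply, one_mul, Module.End.one_apply]
    exact congrArg _ Finsupp.mapDomain_id
  map_mul' := by
    intro σ τ
    refine LinearMap.ext fun x => ?_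
    obtain ⟨y, rfl⟩ := Submodule.Quotient.mk_surjective _ x
    simp [Submodule.mapQ_apply, ← Finsupp.mapDomain_comp, Function.comp, mul_assoc]


/-! ### Auxiliary machinery -/

namespace BranchAux

/-! #### Generic lemmas about the induced module -/

section Generic

variable (k : Type) [CommRing k] {G : Type} [Group G] (H : Subgroup G)
  {W : Type} [AddCommGroup W] [Module k W] (ρ : Representation k (↥H) W)

lemma mk_single_rel (g : G) (h : ↥H) (w : W) :
    (Submodule.Quotient.mk (Finsupp.single (g * (h : G)) w) : IndCar k H ρ)
      = Submodule.Quotient.mk (Finsupp.single g (ρ h w)) := by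
  rw [Submodule.Quotient.eq]
  exact Submodule.subset_span ⟨g, h, w, rfl⟩

lemma indRep_mk_single (σ : G) (g : G) (w : W) :
    indRep k H ρ σ (Submodule.Quotient.mk (Finsupp.single g w))
      = Submodule.Quotient.mk (Finsupp.single (σ * g) w) := by
  simp only [indRep, MonoidHom.coe_mk, OneHom.coe_mk]
  rw [Submodule.mapQ_apply, Finsupp.lmapDomain_apply, Finsupp.mapDomain_single]

variable {M : Type} [AddCommGroup M] [Module k M]

/-- Universal property: to give a linear map out of `Ind_H^G W`, give a compatible family
of linear maps indexed by `G`. -/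
noncomputable def indLift (f : G → W →ₗ[k] M)
    (hf : ∀ (g : G) (h : ↥H) (w : W), f (g * (h : G)) w = f g (ρ h w)) :
    IndCar k H ρ →ₗ[k] M :=
  Submodule.liftQ _ (Finsupp.lsum k f) (by
    rw [indRelations, Submodule.span_le]
    rintro x ⟨g, h, w, rfl⟩
    simp only [SetLike.mem_coe, LinearMap.mem_ker, map_sub, Finsupp.lsum_single]
    rw [hf g h w, sub_self])

lemma indLift_mk_single (f : G → W →ₗ[k] M) (hf) (g : G) (w : W) :
    indLift k H ρ f hf (Submodule.Quotient.mk (Finsupp.single g w)) = f g w := by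
  rw [indLift, Submodule.liftQ_apply, Finsupp.lsum_single]

lemma ind_hom_ext {F F' : IndCar k H ρ →ₗ[k] M}
    (h : ∀ (g : G) (w : W), F (Submodule.Quotient.mk (Finsupp.single g w))
      = F' (Submodule.Quotient.mk (Finsupp.single g w))) : F = F' := by
  apply Submodule.linearMap_qext
  apply Finsupp.lhom_ext
  intro g w
  exact h g w

end Generic

/-! #### Lemmas about `Fin` permutations and embeddings -/

variable {n : ℕ}

lemma castSucc_mk (x : Fin (n+1)) (hx : (x:ℕ) < n) :
    Fin.castSucc (⟨(x:ℕ), hx⟩ : Fin n) = x := Fin.ext rfl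

lemma castEmb_apply_val {M N : ℕ} (hMN : M ≤ N) (σ : Perm (Fin M)) (i : Fin N)
    (hi : (i : ℕ) < M) :
    (Equiv.Perm.viaEmbeddingHom (Fin.castLEEmb hMN) σ i : ℕ) = (σ ⟨(i:ℕ), hi⟩ : ℕ) := by
  have key : Equiv.Perm.viaEmbeddingHom (Fin.castLEEmb hMN) σ
        (Fin.castLEEmb hMN ⟨(i:ℕ), hi⟩)
      = Fin.castLEEmb hMN (σ ⟨(i:ℕ), hi⟩) := by
    rw [Equiv.Perm.viaEmbeddingHom_apply]
    exact Equiv.Perm.viaEmbedding_apply _ _ _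
  have h2 : (Fin.castLEEmb hMN ⟨(i:ℕ), hi⟩ : Fin N) = i := Fin.ext rfl
  rw [h2] at key
  rw [key]
  rfl

lemma castEmb_apply_ge {M N : ℕ} (hMN : M ≤ N) (σ : Perm (Fin M)) (i : Fin N)
    (hi : M ≤ (i : ℕ)) :
    Equiv.Perm.viaEmbeddingHom (Fin.castLEEmb hMN) σ i = i := by
  rw [Equiv.Perm.viaEmbeddingHom_apply, Equiv.Perm.viaEmbedding_apply_of_notMem]
  rintro ⟨x, hx⟩
  have := congrArg Fin.val hx
  simp only [Fin.castLEEmb_apply, Fin.coe_castLE] at this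
  have := x.2
  omega

/-- The standard inclusion `S_n → S_{n+1}`. -/
noncomputable def ι (n : ℕ) : Perm (Fin n) →* Perm (Fin (n+1)) :=
  Equiv.Perm.viaEmbeddingHom (Fin.castLEEmb (Nat.le_succ n))

lemma ι_apply_val (σ : Perm (Fin n)) (i : Fin (n+1)) (hi : (i : ℕ) < n) :
    (ι n σ i : ℕ) = (σ ⟨(i:ℕ), hi⟩ : ℕ) := castEmb_apply_val _ σ i hi

lemma ι_apply_last (σ : Perm (Fin n)) : ι n σ (Fin.last n) = Fin.last n :=
  castEmb_apply_ge _ σ _ (by simp [Fin.last])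

lemma ι_injective : Function.Injective (ι n) :=
  Equiv.Perm.viaEmbeddingHom_injective _

/-- restriction of a permutation fixing the last element -/
def restr (g : Perm (Fin (n+1))) (hg : g (Fin.last n) = Fin.last n) : Perm (Fin n) where
  toFun i := ⟨(g i.castSucc : ℕ), by
    have h1 : g i.castSucc ≠ Fin.last n := by
      intro h
      have h2 := g.injective (h.trans hg.symm)
      have := congrArg Fin.val h2
      simp [Fin.last] at this
      omega
    exact Fin.val_lt_last h1⟩
  invFun i := ⟨(g⁻¹ i.castSucc : ℕ), by
    have hg' : g⁻¹ (Fin.last n) = Fin.last n := by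
      conv_lhs => rw [← hg]
      simp
    have h1 : g⁻¹ i.castSucc ≠ Fin.last n := by
      intro h
      have h2 := g⁻¹.injective (h.trans hg'.symm)
      have := congrArg Fin.val h2
      simp [Fin.last] at this
      omega
    exact Fin.val_lt_last h1⟩
  left_inv i := by
    apply Fin.ext
    simp only [castSucc_mk]
    simp
  right_inv i := by
    apply Fin.ext
    simp only [castSucc_mk]
    simp

lemma restr_apply_val (g : Perm (Fin (n+1))) (hg : g (Fin.last n) = Fin.last n) (i : Fin n) :
    (restr g hg i : ℕ) = (g i.castSucc : ℕ) := rfl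

lemma ι_restr (g : Perm (Fin (n+1))) (hg : g (Fin.last n) = Fin.last n) :
    ι n (restr g hg) = g := by
  ext i
  rcases Nat.lt_or_ge (i : ℕ) n with hi | hi
  · rw [ι_apply_val _ i hi, restr_apply_val]
    rw [castSucc_mk i hi]
  · have : i = Fin.last n := by
      ext; simpa [Fin.last] using Nat.le_antisymm (Nat.lt_succ_iff.mp i.isLt) hi
    subst this
    rw [ι_apply_last, hg]

lemma restr_eq (g : Perm (Fin (n+1))) (hg : g (Fin.last n) = Fin.last n)
    (σ : Perm (Fin n)) (h : ι n σ = g) : restr g hg = σ :=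
  ι_injective (by rw [ι_restr, h])

/-! #### Young subgroup lemmas -/

lemma mem_young {N M : ℕ} (σ : Perm (Fin N)) :
    σ ∈ young N M ↔ ∀ i : Fin N, ((σ i : ℕ) < M ↔ (i : ℕ) < M) := Iff.rfl

lemma block_apply_val {N M : ℕ} (hMN : M ≤ N) (σ : young N M) (i : Fin M) :
    (youngToBlock N M hMN σ i : ℕ) = (σ.1 ⟨(i : ℕ), lt_of_lt_of_le i.2 hMN⟩ : ℕ) := rfl

lemma swap_val {N : ℕ} (a b x : Fin N) :
    ((Equiv.swap a b) x : ℕ) =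
      if (x:ℕ) = (a:ℕ) then (b:ℕ) else if (x:ℕ) = (b:ℕ) then (a:ℕ) else (x:ℕ) := by
  rw [Equiv.swap_apply_def]
  rcases eq_or_ne x a with h|h <;> rcases eq_or_ne x b with h2|h2 <;>
    simp_all [Fin.ext_iff]

lemma swap_mem_young {N M : ℕ} (a b : Fin N) (h : ((a:ℕ) < M ↔ (b:ℕ) < M)) :
    Equiv.swap a b ∈ young N M := by
  intro i
  rw [swap_val]
  split_ifs with h1 h2 <;> omega

lemma block_swap_lt {N M : ℕ} (hMN : M ≤ N) (a b : Fin N) (ha : (a:ℕ) < M)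
    (hb : (b:ℕ) < M) (hmem : Equiv.swap a b ∈ young N M) :
    youngToBlock N M hMN ⟨Equiv.swap a b, hmem⟩ = Equiv.swap ⟨(a:ℕ), ha⟩ ⟨(b:ℕ), hb⟩ := by
  ext i
  rw [block_apply_val, swap_val, swap_val]

lemma block_swap_ge {N M : ℕ} (hMN : M ≤ N) (a b : Fin N) (ha : M ≤ (a:ℕ))
    (hb : M ≤ (b:ℕ)) (hmem : Equiv.swap a b ∈ young N M) :
    youngToBlock N M hMN ⟨Equiv.swap a b, hmem⟩ = 1 := by
  ext i
  have h2 := i.2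
  rw [block_apply_val, swap_val]
  simp only [Fin.val_mk, Equiv.Perm.coe_one, id_eq]
  split_ifs <;> omega

lemma ι_mem_young {M : ℕ} (hMn : M ≤ n) (σ : Perm (Fin n)) (hσ : σ ∈ young n M) :
    ι n σ ∈ young (n+1) M := by
  intro i
  rcases Nat.lt_or_ge (i : ℕ) n with hi | hi
  · rw [ι_apply_val σ i hi]
    exact hσ ⟨(i:ℕ), hi⟩
  · have hlast : i = Fin.last n := by
      ext; simpa [Fin.last] using Nat.le_antisymm (Nat.lt_succ_iff.mp i.isLt) hi
    subst hlast
    rw [ι_apply_last]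

lemma block_ι {M : ℕ} (hMn : M ≤ n) (σ : Perm (Fin n)) (hσ : σ ∈ young n M)
    (hmem : ι n σ ∈ young (n+1) M) :
    youngToBlock (n+1) M (le_trans hMn (Nat.le_succ n)) ⟨ι n σ, hmem⟩
      = youngToBlock n M hMn ⟨σ, hσ⟩ := by
  ext i
  rw [block_apply_val, block_apply_val, ι_apply_val]

lemma restr_mem_young {M : ℕ} (g : Perm (Fin (n+1)))
    (hg : g (Fin.last n) = Fin.last n) (hmem : g ∈ young (n+1) M) :
    restr g hg ∈ young n M := by
  intro i
  have := hmem i.castSucc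
  rw [restr_apply_val]
  simpa using this

lemma block_restr {M : ℕ} (hMn : M ≤ n) (g : Perm (Fin (n+1)))
    (hg : g (Fin.last n) = Fin.last n) (hmem : g ∈ young (n+1) M)
    (hmem' : restr g hg ∈ young n M) :
    youngToBlock n M hMn ⟨restr g hg, hmem'⟩
      = youngToBlock (n+1) M (le_trans hMn (Nat.le_succ n)) ⟨g, hmem⟩ := by
  ext i
  rw [block_apply_val, block_apply_val, restr_apply_val]
  congr 2

end BranchAux

namespace BranchAux

section Conj

variable {m n : ℕ}

lemma mul3_apply {X : Type} (a b c : Perm X) (x : X) : (a * b * c) x = a (b (c x)) := rfl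

/-- The element `m-1` of `Fin (n+1)`. -/
def c1 (hmn : m ≤ n) : Fin (n+1) := ⟨m-1, by omega⟩

/-- The transposition `(m-1, n)` in `S_{n+1}`. -/
def tp (hmn : m ≤ n) : Perm (Fin (n+1)) := Equiv.swap (c1 hmn) (Fin.last n)

lemma tp_val (hmn : m ≤ n) (i : Fin (n+1)) :
    (tp hmn i : ℕ) = if (i:ℕ) = m-1 then n else if (i:ℕ) = n then m-1 else (i:ℕ) := by
  rw [tp, swap_val]
  rfl

lemma tp_mul_self (hmn : m ≤ n) : tp hmn * tp hmn = 1 := Equiv.swap_mul_self _ _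

lemma tp_last (hmn : m ≤ n) : tp hmn (Fin.last n) = c1 hmn :=
  Equiv.swap_apply_right _ _

lemma tp_c1 (hmn : m ≤ n) : tp hmn (c1 hmn) = Fin.last n :=
  Equiv.swap_apply_left _ _

lemma tp_fix (hmn : m ≤ n) (x : Fin (n+1)) (h1 : (x:ℕ) ≠ m-1) (h2 : (x:ℕ) ≠ n) :
    tp hmn x = x := by
  apply Fin.ext
  rw [tp_val]
  simp [h1, h2]

lemma ι_apply_mk (σ : Perm (Fin n)) (v : ℕ) (hv : v < n) (hv' : v < n+1) :
    (ι n σ ⟨v, hv'⟩ : ℕ) = (σ ⟨v, hv⟩ : ℕ) :=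
  ι_apply_val σ ⟨v, hv'⟩ hv

lemma block_apply_mk {N M : ℕ} (hMN : M ≤ N) (σ : young N M) (v : ℕ) (hv : v < M)
    (hv' : v < N) :
    (youngToBlock N M hMN σ ⟨v, hv⟩ : ℕ) = (σ.1 ⟨v, hv'⟩ : ℕ) := rfl

lemma restr_apply_mk (g : Perm (Fin (n+1))) (hg : g (Fin.last n) = Fin.last n)
    (v : ℕ) (hv : v < n) (hv' : v < n+1) :
    (restr g hg ⟨v, hv⟩ : ℕ) = (g ⟨v, hv'⟩ : ℕ) := rfl

/-- P1: conjugation by `tp` of an element fixing `c1` fixes `last`. -/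
lemma tp_conj_fix_last (hmn : m ≤ n) (u : Perm (Fin (n+1)))
    (hufix : u (c1 hmn) = c1 hmn) :
    (tp hmn * u * tp hmn) (Fin.last n) = Fin.last n := by
  rw [mul3_apply, tp, Equiv.swap_apply_right, hufix, Equiv.swap_apply_left]

/-- P4: for `h` in the Young subgroup `S_{m-1} × S_{n-m+1}` of `S_n`, the conjugate
`tp · ι h · tp` lies in the Young subgroup `S_m × S_{n+1-m}` of `S_{n+1}`. -/
lemma tp_conj_ι_mem (hm1 : 1 ≤ m) (hmn : m ≤ n) (h : Perm (Fin n))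
    (hh : h ∈ young n (m-1)) :
    tp hmn * ι n h * tp hmn ∈ young (n+1) m := by
  intro x
  rw [mul3_apply]
  by_cases hx1 : (x:ℕ) = m-1
  · have e1 : tp hmn x = Fin.last n := by
      apply Fin.ext
      rw [tp_val]
      simp [hx1, Fin.last]
    rw [e1, ι_apply_last, tp_last hmn]
    show m - 1 < m ↔ (x:ℕ) < m
    omega
  by_cases hx2 : (x:ℕ) = n
  · have e1 : tp hmn x = c1 hmn := by
      apply Fin.ext
      rw [tp_val, hx2]
      have : ¬ (n = m-1) := by omega
      simp [this, c1]
    rw [e1]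
    have hm1n : m - 1 < n := by omega
    have e2 : (ι n h (c1 hmn) : ℕ) = (h ⟨m-1, hm1n⟩ : ℕ) := ι_apply_mk h (m-1) hm1n (by omega)
    have hval := hh ⟨m-1, hm1n⟩
    set v : ℕ := (h ⟨m-1, hm1n⟩ : ℕ) with hvdef
    have hvn : v < n := (h ⟨m-1, hm1n⟩).isLt
    have e3 : ι n h (c1 hmn) = ⟨v, by omega⟩ := Fin.ext e2
    rw [e3, tp_val]
    simp only [c1, Fin.val_mk] at hval ⊢
    split_ifs <;> omega
  · have e1 : tp hmn x = x := tp_fix hmn x hx1 hx2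
    rw [e1]
    have hxn : (x:ℕ) < n := by omega
    have e2 : (ι n h x : ℕ) = (h ⟨(x:ℕ), hxn⟩ : ℕ) := ι_apply_val h x hxn
    have hval := hh ⟨(x:ℕ), hxn⟩
    set v : ℕ := (h ⟨(x:ℕ), hxn⟩ : ℕ) with hvdef
    have hvn : v < n := (h ⟨(x:ℕ), hxn⟩).isLt
    have e3 : ι n h x = ⟨v, by omega⟩ := Fin.ext e2
    rw [e3, tp_val]
    simp only [c1, Fin.val_mk] at hval ⊢
    split_ifs <;> omega


/-- P2: the restriction of the conjugate lies in the smaller Young subgroup. -/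
lemma restr_tp_conj_mem (hm1 : 1 ≤ m) (hmn : m ≤ n) (u : Perm (Fin (n+1)))
    (hu : u ∈ young (n+1) m) (hufix : u (c1 hmn) = c1 hmn) :
    restr (tp hmn * u * tp hmn) (tp_conj_fix_last hmn u hufix) ∈ young n (m-1) := by
  intro i
  have hcs : Fin.castSucc i = (⟨(i:ℕ), by omega⟩ : Fin (n+1)) := Fin.ext rfl
  rw [restr_apply_val, hcs, mul3_apply]
  by_cases hA : (i:ℕ) = m-1
  · have e1 : tp hmn (⟨(i:ℕ), by omega⟩ : Fin (n+1)) = Fin.last n := by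
      apply Fin.ext
      rw [tp_val]
      simp [hA, Fin.last]
    rw [e1]
    have h2 : m ≤ (u (Fin.last n) : ℕ) := by
      have h := hu (Fin.last n)
      simp only [Fin.val_last] at h
      omega
    rw [tp_val]
    have h3 := (u (Fin.last n)).isLt
    split_ifs <;> omega
  · have e1 : tp hmn (⟨(i:ℕ), by omega⟩ : Fin (n+1)) = ⟨(i:ℕ), by omega⟩ :=
      tp_fix hmn _ (by show (i:ℕ) ≠ m-1; omega) (by show (i:ℕ) ≠ n; have := i.isLt; omega)
    rw [e1]
    have h2 := hu (⟨(i:ℕ), by omega⟩ : Fin (n+1))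
    have h3 : (u (⟨(i:ℕ), by omega⟩ : Fin (n+1)) : ℕ) ≠ m - 1 := by
      intro hc
      have hc' : u (⟨(i:ℕ), by omega⟩ : Fin (n+1)) = c1 hmn := Fin.ext (by rw [hc]; rfl)
      have hinj := u.injective (hc'.trans hufix.symm)
      have hval := congrArg Fin.val hinj
      simp only [c1, Fin.val_mk] at hval
      exact hA hval
    have h4 := (u (⟨(i:ℕ), by omega⟩ : Fin (n+1))).isLt
    rw [tp_val]
    simp only [Fin.val_mk] at h2 ⊢
    split_ifs <;> omega

/-- P3: the block part of the conjugate equals the block part of `u`. -/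
lemma block_tp_conj (hm1 : 1 ≤ m) (hmn : m ≤ n) (u : Perm (Fin (n+1)))
    (hu : u ∈ young (n+1) m) (hufix : u (c1 hmn) = c1 hmn)
    (hmem' : restr (tp hmn * u * tp hmn) (tp_conj_fix_last hmn u hufix) ∈ young n (m-1)) :
    Equiv.Perm.viaEmbeddingHom (Fin.castLEEmb (Nat.sub_le m 1))
      (youngToBlock n (m-1) (le_trans (Nat.sub_le m 1) hmn)
        ⟨restr (tp hmn * u * tp hmn) (tp_conj_fix_last hmn u hufix), hmem'⟩)
    = youngToBlock (n+1) m (le_trans hmn (Nat.le_succ n)) ⟨u, hu⟩ := by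
  ext i
  by_cases hi : (i:ℕ) < m-1
  · rw [castEmb_apply_val (Nat.sub_le m 1) _ i hi]
    rw [block_apply_mk _ _ (i:ℕ) hi (by omega)]
    rw [restr_apply_mk _ _ (i:ℕ) (by omega) (by omega)]
    rw [block_apply_mk _ _ (i:ℕ) i.isLt (by omega)]
    rw [mul3_apply]
    have e1 : tp hmn (⟨(i:ℕ), by omega⟩ : Fin (n+1)) = ⟨(i:ℕ), by omega⟩ :=
      tp_fix hmn _ (by show (i:ℕ) ≠ m-1; omega) (by show (i:ℕ) ≠ n; omega)
    rw [e1]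
    have h2 : (u (⟨(i:ℕ), by omega⟩ : Fin (n+1)) : ℕ) < m :=
      (hu _).mpr (by show (i:ℕ) < m; omega)
    have h3 : (u (⟨(i:ℕ), by omega⟩ : Fin (n+1)) : ℕ) ≠ m - 1 := by
      intro hc
      have hc' : u (⟨(i:ℕ), by omega⟩ : Fin (n+1)) = c1 hmn := Fin.ext (by rw [hc]; rfl)
      have hinj := u.injective (hc'.trans hufix.symm)
      have hval := congrArg Fin.val hinj
      simp only [c1, Fin.val_mk] at hval
      omega
    have e2 : tp hmn (u (⟨(i:ℕ), by omega⟩ : Fin (n+1)))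
        = u (⟨(i:ℕ), by omega⟩ : Fin (n+1)) := tp_fix hmn _ h3 (by omega)
    rw [e2]
  · have him : (i:ℕ) = m-1 := by have := i.2; omega
    rw [castEmb_apply_ge (Nat.sub_le m 1) _ i (by omega)]
    rw [block_apply_mk _ _ (i:ℕ) i.isLt (by omega)]
    have e1 : (⟨(i:ℕ), by omega⟩ : Fin (n+1)) = c1 hmn := Fin.ext him
    rw [e1, hufix]
    exact him

end Conj

end BranchAux

namespace BranchAux

section Main

variable (k : Type) [CommRing k] (m n : ℕ) (hm1 : 1 ≤ m) (hmn : m ≤ n)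
  (W : Type) [AddCommGroup W] [Module k W] (ρW : Representation k (Equiv.Perm (Fin m)) W)

/-- The representation of the big Young subgroup on `W`. -/
noncomputable abbrev ρtop : Representation k (↥(young (n+1) m)) W :=
  ρW.comp (youngToBlock (n + 1) m (le_trans hmn (Nat.le_succ n)))

/-- The representation of `S_m × S_{n-m}` on `W`. -/
noncomputable abbrev ρa : Representation k (↥(young n m)) W :=
  ρW.comp (youngToBlock n m hmn)

/-- The representation of `S_{m-1} × S_{n-m+1}` on `Res W`. -/
noncomputable abbrev ρb : Representation k (↥(young n (m-1))) W :=
  (ρW.comp (Equiv.Perm.viaEmbeddingHom (Fin.castLEEmb (Nat.sub_le m 1)))).comp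
    (youngToBlock n (m - 1) (le_trans (Nat.sub_le m 1) hmn))

lemma tp_inv : (tp hmn)⁻¹ = tp hmn := by
  rw [tp]
  exact Equiv.swap_inv _ _

/-- The first inclusion `Ind_{S_m × S_{n-m}}^{S_n} W ⟶ Res Ind_{S_m × S_{n+1-m}}^{S_{n+1}} W`. -/
noncomputable def I1 : IndCar k (young n m) (ρa k m n hmn W ρW)
    →ₗ[k] IndCar k (young (n+1) m) (ρtop k m n hmn W ρW) :=
  indLift k (young n m) (ρa k m n hmn W ρW)
    (fun σ => (Submodule.mkQ _) ∘ₗ Finsupp.lsingle (ι n σ))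
    (by
      intro σ h w
      simp only [LinearMap.comp_apply, Finsupp.lsingle_apply, Submodule.mkQ_apply]
      rw [map_mul]
      have hmem : ι n h.1 ∈ young (n+1) m := ι_mem_young hmn h.1 h.2
      rw [mk_single_rel k (young (n+1) m) (ρtop k m n hmn W ρW) (ι n σ) ⟨ι n h.1, hmem⟩ w]
      have hblock : ρtop k m n hmn W ρW ⟨ι n h.1, hmem⟩ = ρa k m n hmn W ρW h := by
        show ρW _ = ρW _
        rw [block_ι hmn h.1 h.2 hmem]
      rw [hblock])

lemma I1_mk (τ : Perm (Fin n)) (w : W) :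
    I1 k m n hmn W ρW (Submodule.Quotient.mk (Finsupp.single τ w))
      = Submodule.Quotient.mk (Finsupp.single (ι n τ) w) := by
  rw [I1, indLift_mk_single]
  rfl

/-- The second inclusion. -/
noncomputable def I2 : IndCar k (young n (m-1)) (ρb k m n hmn W ρW)
    →ₗ[k] IndCar k (young (n+1) m) (ρtop k m n hmn W ρW) :=
  indLift k (young n (m-1)) (ρb k m n hmn W ρW)
    (fun σ => (Submodule.mkQ _) ∘ₗ Finsupp.lsingle (ι n σ * tp hmn))
    (by
      intro σ h w
      simp only [LinearMap.comp_apply, Finsupp.lsingle_apply, Submodule.mkQ_apply]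
      have hmem : tp hmn * ι n h.1 * tp hmn ∈ young (n+1) m :=
        tp_conj_ι_mem hm1 hmn h.1 h.2
      have key : ι n (σ * h.1) * tp hmn
          = (ι n σ * tp hmn) * (tp hmn * ι n h.1 * tp hmn) := by
        rw [map_mul]
        have hgr : (ι n σ * tp hmn) * ((tp hmn)⁻¹ * ι n h.1 * tp hmn)
            = ι n σ * ι n h.1 * tp hmn := by group
        rw [tp_inv] at hgr
        rw [hgr]
      rw [key, mk_single_rel k (young (n+1) m) (ρtop k m n hmn W ρW)
        (ι n σ * tp hmn) ⟨_, hmem⟩ w]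
      have hufix : (tp hmn * ι n h.1 * tp hmn) (c1 hmn) = c1 hmn := by
        rw [mul3_apply, tp_c1, ι_apply_last, tp_last]
      have e0 : tp hmn * (tp hmn * ι n h.1 * tp hmn) * tp hmn = ι n h.1 := by
        have hgr : (tp hmn)⁻¹ * ((tp hmn) * ι n h.1 * tp hmn) * (tp hmn)⁻¹ = ι n h.1 := by
          group
        rw [tp_inv] at hgr
        exact hgr
      have hres : restr (tp hmn * (tp hmn * ι n h.1 * tp hmn) * tp hmn)
          (tp_conj_fix_last hmn _ hufix) = h.1 :=
        restr_eq _ _ h.1 (by rw [e0])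
      have hblock := block_tp_conj hm1 hmn _ hmem hufix
        (restr_tp_conj_mem hm1 hmn _ hmem hufix)
      have hsub : (⟨restr (tp hmn * (tp hmn * ι n h.1 * tp hmn) * tp hmn)
            (tp_conj_fix_last hmn _ hufix),
            restr_tp_conj_mem hm1 hmn _ hmem hufix⟩ : ↥(young n (m-1))) = h :=
        Subtype.ext hres
      rw [hsub] at hblock
      have hfin : ρtop k m n hmn W ρW ⟨tp hmn * ι n h.1 * tp hmn, hmem⟩
          = ρb k m n hmn W ρW h := by
        show ρW _ = ρW _
        rw [← hblock]
      rw [hfin])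

lemma I2_mk (τ : Perm (Fin n)) (w : W) :
    I2 k m n hm1 hmn W ρW (Submodule.Quotient.mk (Finsupp.single τ w))
      = Submodule.Quotient.mk (Finsupp.single (ι n τ * tp hmn) w) := by
  rw [I2, indLift_mk_single]
  rfl

end Main

end BranchAux

namespace BranchAux

section Emap

variable {m n : ℕ}

lemma perm_apply_inv_self {X : Type} (g : Perm X) (x : X) : g (g⁻¹ x) = x :=
  (Equiv.eq_symm_apply g).mp rfl

/-- Coset normalizer for the first double coset. -/
def sA (g : Perm (Fin (n+1))) : Perm (Fin n) :=
  restr (g * Equiv.swap (g⁻¹ (Fin.last n)) (Fin.last n)) (by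
    rw [Equiv.Perm.mul_apply, Equiv.swap_apply_right, perm_apply_inv_self])

lemma ι_sA (g : Perm (Fin (n+1))) :
    ι n (sA g) = g * Equiv.swap (g⁻¹ (Fin.last n)) (Fin.last n) := ι_restr _ _

/-- Coset normalizer for the second double coset. -/
def sB (hmn : m ≤ n) (g : Perm (Fin (n+1))) : Perm (Fin n) :=
  restr (g * Equiv.swap (c1 hmn) (g⁻¹ (Fin.last n)) * tp hmn) (by
    rw [mul3_apply, tp_last hmn, Equiv.swap_apply_left, perm_apply_inv_self])

lemma ι_sB (hmn : m ≤ n) (g : Perm (Fin (n+1))) :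
    ι n (sB hmn g) = g * Equiv.swap (c1 hmn) (g⁻¹ (Fin.last n)) * tp hmn := ι_restr _ _

end Emap

section Main2

variable (k : Type) [CommRing k] (m n : ℕ) (hm1 : 1 ≤ m) (hmn : m ≤ n)
  (W : Type) [AddCommGroup W] [Module k W] (ρW : Representation k (Equiv.Perm (Fin m)) W)

/-- The underlying family of the inverse map `E`. -/
noncomputable def fE (g : Perm (Fin (n+1))) :
    W →ₗ[k] (IndCar k (young n m) (ρa k m n hmn W ρW)
      × IndCar k (young n (m-1)) (ρb k m n hmn W ρW)) :=
  if hj : ((g⁻¹ (Fin.last n) : ℕ)) < m then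
    LinearMap.prod 0 ((Submodule.mkQ _) ∘ₗ (Finsupp.lsingle (sB hmn g)) ∘ₗ
      (ρW (Equiv.swap ⟨m-1, by omega⟩ ⟨(g⁻¹ (Fin.last n) : ℕ), hj⟩) : W →ₗ[k] W))
  else
    LinearMap.prod ((Submodule.mkQ _) ∘ₗ Finsupp.lsingle (sA g)) 0

end Main2

end BranchAux

namespace BranchAux

section Main3

variable (k : Type) [CommRing k] (m n : ℕ) (hm1 : 1 ≤ m) (hmn : m ≤ n)
  (W : Type) [AddCommGroup W] [Module k W] (ρW : Representation k (Equiv.Perm (Fin m)) W)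

lemma fE_compat (g : Perm (Fin (n+1))) (h : ↥(young (n+1) m)) (w : W) :
    fE k m n hm1 hmn W ρW (g * h.1) w
      = fE k m n hm1 hmn W ρW g (ρtop k m n hmn W ρW h w) := by
  have hj' : (g * h.1)⁻¹ (Fin.last n) = h.1⁻¹ (g⁻¹ (Fin.last n)) := by
    rw [mul_inv_rev]
    rfl
  have hiff : ((h.1⁻¹ (g⁻¹ (Fin.last n)) : ℕ) < m ↔ ((g⁻¹ (Fin.last n)) : ℕ) < m) :=
    (young (n+1) m).inv_mem h.2 (g⁻¹ (Fin.last n))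
  by_cases hc : ((g⁻¹ (Fin.last n)) : ℕ) < m
  · -- second double coset
    rw [fE, fE, hj', dif_pos (hiff.mpr hc), dif_pos hc]
    simp only [LinearMap.prod_apply, LinearMap.comp_apply, Finsupp.lsingle_apply,
      Submodule.mkQ_apply, LinearMap.zero_apply, Function.prod]
    refine Prod.ext rfl ?_
    have hs1mem : Equiv.swap (c1 hmn) (g⁻¹ (Fin.last n)) ∈ young (n+1) m :=
      swap_mem_young _ _ (by show m-1 < m ↔ _; omega)
    have hs2mem : Equiv.swap (c1 hmn) (h.1⁻¹ (g⁻¹ (Fin.last n))) ∈ young (n+1) m :=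
      swap_mem_young _ _ (by show m-1 < m ↔ _; omega)
    have humem : Equiv.swap (c1 hmn) (g⁻¹ (Fin.last n)) * h.1 *
        Equiv.swap (c1 hmn) (h.1⁻¹ (g⁻¹ (Fin.last n))) ∈ young (n+1) m :=
      mul_mem (mul_mem hs1mem h.2) hs2mem
    have hufix : (Equiv.swap (c1 hmn) (g⁻¹ (Fin.last n)) * h.1 *
        Equiv.swap (c1 hmn) (h.1⁻¹ (g⁻¹ (Fin.last n)))) (c1 hmn) = c1 hmn := by
      rw [mul3_apply, Equiv.swap_apply_left, perm_apply_inv_self,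
        Equiv.swap_apply_right]
    have hkey : sB hmn (g * h.1)
        = sB hmn g * restr (tp hmn * (Equiv.swap (c1 hmn) (g⁻¹ (Fin.last n)) * h.1 *
            Equiv.swap (c1 hmn) (h.1⁻¹ (g⁻¹ (Fin.last n)))) * tp hmn)
          (tp_conj_fix_last hmn _ hufix) := by
      apply ι_injective
      rw [map_mul, ι_sB, ι_sB, ι_restr, hj']
      have hgr : (g * Equiv.swap (c1 hmn) (g⁻¹ (Fin.last n)) * tp hmn) *
          ((tp hmn)⁻¹ * ((Equiv.swap (c1 hmn) (g⁻¹ (Fin.last n)))⁻¹ * h.1 *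
            Equiv.swap (c1 hmn) (h.1⁻¹ (g⁻¹ (Fin.last n)))) * tp hmn)
          = (g * h.1) * Equiv.swap (c1 hmn) (h.1⁻¹ (g⁻¹ (Fin.last n))) * tp hmn := by
        group
      rw [tp_inv, Equiv.swap_inv] at hgr
      exact hgr.symm
    rw [hkey]
    have hresmem := restr_tp_conj_mem hm1 hmn _ humem hufix
    rw [mk_single_rel k (young n (m-1)) (ρb k m n hmn W ρW) (sB hmn g) ⟨_, hresmem⟩ _]
    have hval : ρb k m n hmn W ρW ⟨_, hresmem⟩
        (ρW (Equiv.swap ⟨m-1, by omega⟩ ⟨(h.1⁻¹ (g⁻¹ (Fin.last n)) : ℕ), hiff.mpr hc⟩) w)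
        = ρW (Equiv.swap ⟨m-1, by omega⟩ ⟨(g⁻¹ (Fin.last n) : ℕ), hc⟩)
          (ρtop k m n hmn W ρW h w) := by
      have hPQ : Equiv.Perm.viaEmbeddingHom (Fin.castLEEmb (Nat.sub_le m 1))
            (youngToBlock n (m-1) (le_trans (Nat.sub_le m 1) hmn) ⟨_, hresmem⟩) *
            Equiv.swap (⟨m-1, by omega⟩ : Fin m)
              ⟨(h.1⁻¹ (g⁻¹ (Fin.last n)) : ℕ), hiff.mpr hc⟩
          = Equiv.swap (⟨m-1, by omega⟩ : Fin m) ⟨(g⁻¹ (Fin.last n) : ℕ), hc⟩ *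
            youngToBlock (n+1) m (le_trans hmn (Nat.le_succ n)) h := by
        have hblock := block_tp_conj hm1 hmn _ humem hufix hresmem
        rw [hblock]
        have hsplit : (⟨Equiv.swap (c1 hmn) (g⁻¹ (Fin.last n)) * h.1 *
            Equiv.swap (c1 hmn) (h.1⁻¹ (g⁻¹ (Fin.last n))), humem⟩ : ↥(young (n+1) m))
            = ⟨Equiv.swap (c1 hmn) (g⁻¹ (Fin.last n)), hs1mem⟩ * h *
              ⟨Equiv.swap (c1 hmn) (h.1⁻¹ (g⁻¹ (Fin.last n))), hs2mem⟩ := rfl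
        rw [hsplit, map_mul, map_mul]
        rw [block_swap_lt (le_trans hmn (Nat.le_succ n)) (c1 hmn) (g⁻¹ (Fin.last n))
          (by show m-1 < m; omega) hc hs1mem]
        rw [block_swap_lt (le_trans hmn (Nat.le_succ n)) (c1 hmn)
          (h.1⁻¹ (g⁻¹ (Fin.last n))) (by show m-1 < m; omega) (hiff.mpr hc) hs2mem]
        simp only [c1, Fin.val_mk]
        rw [mul_assoc, Equiv.swap_mul_self, mul_one]
      show ρW _ (ρW _ w) = ρW _ (ρW _ w)
      rw [← Module.End.mul_apply, ← Module.End.mul_apply, ← map_mul, ← map_mul, hPQ]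
    rw [hval]
  · -- first double coset
    rw [fE, fE, hj', dif_neg (fun hx => hc (hiff.mp hx)), dif_neg hc]
    simp only [LinearMap.prod_apply, LinearMap.comp_apply, Finsupp.lsingle_apply,
      Submodule.mkQ_apply, LinearMap.zero_apply, Function.prod]
    refine Prod.ext ?_ rfl
    have hs1mem : Equiv.swap (g⁻¹ (Fin.last n)) (Fin.last n) ∈ young (n+1) m :=
      swap_mem_young _ _ (by simp only [Fin.val_last]; omega)
    have hs2mem : Equiv.swap (h.1⁻¹ (g⁻¹ (Fin.last n))) (Fin.last n) ∈ young (n+1) m :=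
      swap_mem_young _ _ (by simp only [Fin.val_last]; omega)
    have humem : Equiv.swap (g⁻¹ (Fin.last n)) (Fin.last n) * h.1 *
        Equiv.swap (h.1⁻¹ (g⁻¹ (Fin.last n))) (Fin.last n) ∈ young (n+1) m :=
      mul_mem (mul_mem hs1mem h.2) hs2mem
    have hufix : (Equiv.swap (g⁻¹ (Fin.last n)) (Fin.last n) * h.1 *
        Equiv.swap (h.1⁻¹ (g⁻¹ (Fin.last n))) (Fin.last n)) (Fin.last n) = Fin.last n := by
      rw [mul3_apply, Equiv.swap_apply_right, perm_apply_inv_self,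
        Equiv.swap_apply_left]
    have hkey : sA (g * h.1)
        = sA g * restr (Equiv.swap (g⁻¹ (Fin.last n)) (Fin.last n) * h.1 *
            Equiv.swap (h.1⁻¹ (g⁻¹ (Fin.last n))) (Fin.last n)) hufix := by
      apply ι_injective
      rw [map_mul, ι_sA, ι_sA, ι_restr, hj']
      have hgr : (g * Equiv.swap (g⁻¹ (Fin.last n)) (Fin.last n)) *
          ((Equiv.swap (g⁻¹ (Fin.last n)) (Fin.last n))⁻¹ * h.1 *
            Equiv.swap (h.1⁻¹ (g⁻¹ (Fin.last n))) (Fin.last n))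
          = (g * h.1) * Equiv.swap (h.1⁻¹ (g⁻¹ (Fin.last n))) (Fin.last n) := by
        group
      rw [Equiv.swap_inv] at hgr
      exact hgr.symm
    rw [hkey]
    have hresmem := restr_mem_young _ hufix humem
    rw [mk_single_rel k (young n m) (ρa k m n hmn W ρW) (sA g) ⟨_, hresmem⟩ w]
    have hval : ρa k m n hmn W ρW ⟨_, hresmem⟩ w = ρtop k m n hmn W ρW h w := by
      have harg : youngToBlock n m hmn ⟨_, hresmem⟩
          = youngToBlock (n+1) m (le_trans hmn (Nat.le_succ n)) h := by
        rw [block_restr hmn _ hufix humem hresmem]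
        have hsplit : (⟨Equiv.swap (g⁻¹ (Fin.last n)) (Fin.last n) * h.1 *
            Equiv.swap (h.1⁻¹ (g⁻¹ (Fin.last n))) (Fin.last n), humem⟩ : ↥(young (n+1) m))
            = ⟨Equiv.swap (g⁻¹ (Fin.last n)) (Fin.last n), hs1mem⟩ * h *
              ⟨Equiv.swap (h.1⁻¹ (g⁻¹ (Fin.last n))) (Fin.last n), hs2mem⟩ := rfl
        rw [hsplit, map_mul, map_mul]
        rw [block_swap_ge (le_trans hmn (Nat.le_succ n)) _ _ (by omega)
          (by simp only [Fin.val_last]; omega) hs1mem]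
        rw [block_swap_ge (le_trans hmn (Nat.le_succ n)) _ _ (by omega)
          (by simp only [Fin.val_last]; omega) hs2mem]
        rw [one_mul, mul_one]
      show ρW _ w = ρW _ w
      rw [harg]
    rw [hval]

end Main3

end BranchAux

namespace BranchAux

section Main4

variable (k : Type) [CommRing k] (m n : ℕ) (hm1 : 1 ≤ m) (hmn : m ≤ n)
  (W : Type) [AddCommGroup W] [Module k W] (ρW : Representation k (Equiv.Perm (Fin m)) W)

/-- The forward map of the branching isomorphism. -/
noncomputable def E : IndCar k (young (n+1) m) (ρtop k m n hmn W ρW)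
    →ₗ[k] (IndCar k (young n m) (ρa k m n hmn W ρW)
      × IndCar k (young n (m-1)) (ρb k m n hmn W ρW)) :=
  indLift k (young (n+1) m) (ρtop k m n hmn W ρW) (fE k m n hm1 hmn W ρW)
    (fE_compat k m n hm1 hmn W ρW)

lemma perm_refl_eq_one : (Equiv.refl (Fin (n+1))) = (1 : Perm (Fin (n+1))) := rfl

lemma E_mk_ι (τ : Perm (Fin n)) (w : W) :
    E k m n hm1 hmn W ρW (Submodule.Quotient.mk (Finsupp.single (ι n τ) w))
      = (Submodule.Quotient.mk (Finsupp.single τ w), 0) := by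
  rw [E, indLift_mk_single, fE]
  have hj : (ι n τ)⁻¹ (Fin.last n) = Fin.last n := by
    rw [← map_inv, ι_apply_last]
  rw [hj, dif_neg (by simp only [Fin.val_last]; omega)]
  simp only [LinearMap.prod_apply, LinearMap.comp_apply, Finsupp.lsingle_apply,
    Submodule.mkQ_apply, Function.prod]
  refine Prod.ext ?_ rfl
  have hsa : sA (ι n τ) = τ := by
    apply ι_injective
    rw [ι_sA, hj, Equiv.swap_self, perm_refl_eq_one, mul_one]
  rw [hsa]

lemma E_mk_ιtp (τ : Perm (Fin n)) (w : W) :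
    E k m n hm1 hmn W ρW (Submodule.Quotient.mk (Finsupp.single (ι n τ * tp hmn) w))
      = (0, Submodule.Quotient.mk (Finsupp.single τ w)) := by
  rw [E, indLift_mk_single, fE]
  have hj : (ι n τ * tp hmn)⁻¹ (Fin.last n) = c1 hmn := by
    rw [mul_inv_rev, Equiv.Perm.mul_apply, ← map_inv, ι_apply_last, tp_inv, tp_last]
  rw [hj, dif_pos (by show m-1 < m; omega)]
  simp only [LinearMap.prod_apply, LinearMap.comp_apply, Finsupp.lsingle_apply,
    Submodule.mkQ_apply, Function.prod]
  refine Prod.ext rfl ?_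
  have hsb : sB hmn (ι n τ * tp hmn) = τ := by
    apply ι_injective
    rw [ι_sB, hj, Equiv.swap_self, perm_refl_eq_one, mul_one, mul_assoc, tp_mul_self,
      mul_one]
  have hsw : Equiv.swap (⟨m-1, by omega⟩ : Fin m) ⟨(c1 hmn : ℕ), by show m-1 < m; omega⟩
      = 1 := by
    have hmk : (⟨(c1 hmn : ℕ), by show m-1 < m; omega⟩ : Fin m)
        = ⟨m-1, by omega⟩ := rfl
    rw [hmk, Equiv.swap_self]
    rfl
  rw [hsb, hsw, map_one]
  rfl

lemma EI1 : (E k m n hm1 hmn W ρW).comp (I1 k m n hmn W ρW) = LinearMap.inl k _ _ := by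
  apply ind_hom_ext
  intro τ w
  rw [LinearMap.comp_apply, I1_mk, E_mk_ι, LinearMap.inl_apply]

lemma EI2 : (E k m n hm1 hmn W ρW).comp (I2 k m n hm1 hmn W ρW) = LinearMap.inr k _ _ := by
  apply ind_hom_ext
  intro τ w
  rw [LinearMap.comp_apply, I2_mk, E_mk_ιtp, LinearMap.inr_apply]

lemma IE : (LinearMap.coprod (I1 k m n hmn W ρW) (I2 k m n hm1 hmn W ρW)).comp
    (E k m n hm1 hmn W ρW) = LinearMap.id := by
  apply ind_hom_ext
  intro g w
  rw [LinearMap.comp_apply, LinearMap.id_apply, E, indLift_mk_single, fE]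
  by_cases hc : ((g⁻¹ (Fin.last n) : ℕ)) < m
  · rw [dif_pos hc]
    simp only [LinearMap.prod_apply, LinearMap.comp_apply, Finsupp.lsingle_apply,
      Submodule.mkQ_apply, Function.prod, LinearMap.coprod_apply, map_zero, zero_add,
      LinearMap.zero_apply]
    rw [I2_mk]
    have h1 : ι n (sB hmn g) * tp hmn = g * Equiv.swap (c1 hmn) (g⁻¹ (Fin.last n)) := by
      rw [ι_sB, mul_assoc, tp_mul_self, mul_one]
    rw [h1]
    have hsmem : Equiv.swap (c1 hmn) (g⁻¹ (Fin.last n)) ∈ young (n+1) m :=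
      swap_mem_young _ _ (by show m-1 < m ↔ _; omega)
    rw [mk_single_rel k (young (n+1) m) (ρtop k m n hmn W ρW) g ⟨_, hsmem⟩ _]
    have hval : ρtop k m n hmn W ρW ⟨_, hsmem⟩
        (ρW (Equiv.swap ⟨m-1, by omega⟩ ⟨(g⁻¹ (Fin.last n) : ℕ), hc⟩) w) = w := by
      show ρW _ (ρW _ w) = w
      rw [← Module.End.mul_apply, ← map_mul]
      rw [block_swap_lt (le_trans hmn (Nat.le_succ n)) (c1 hmn) (g⁻¹ (Fin.last n))
        (by show m-1 < m; omega) hc hsmem]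
      simp only [c1, Fin.val_mk]
      rw [Equiv.swap_mul_self, map_one]
      rfl
    rw [hval]
  · rw [dif_neg hc]
    simp only [LinearMap.prod_apply, LinearMap.comp_apply, Finsupp.lsingle_apply,
      Submodule.mkQ_apply, Function.prod, LinearMap.coprod_apply, map_zero, add_zero,
      LinearMap.zero_apply]
    rw [I1_mk, ι_sA]
    have hsmem : Equiv.swap (g⁻¹ (Fin.last n)) (Fin.last n) ∈ young (n+1) m :=
      swap_mem_young _ _ (by simp only [Fin.val_last]; omega)
    rw [mk_single_rel k (young (n+1) m) (ρtop k m n hmn W ρW) g ⟨_, hsmem⟩ w]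
    have hval : ρtop k m n hmn W ρW ⟨_, hsmem⟩ w = w := by
      show ρW _ w = w
      rw [block_swap_ge (le_trans hmn (Nat.le_succ n)) _ _ (by omega)
        (by simp only [Fin.val_last]; omega) hsmem, map_one]
      rfl
    rw [hval]

lemma I1_equiv (σ : Perm (Fin n)) :
    (I1 k m n hmn W ρW).comp (indRep k (young n m) (ρa k m n hmn W ρW) σ)
      = (indRep k (young (n+1) m) (ρtop k m n hmn W ρW) (ι n σ)).comp
          (I1 k m n hmn W ρW) := by
  apply ind_hom_ext
  intro τ w
  rw [LinearMap.comp_apply, LinearMap.comp_apply, indRep_mk_single, I1_mk, I1_mk,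
    indRep_mk_single, map_mul]

lemma I2_equiv (σ : Perm (Fin n)) :
    (I2 k m n hm1 hmn W ρW).comp (indRep k (young n (m-1)) (ρb k m n hmn W ρW) σ)
      = (indRep k (young (n+1) m) (ρtop k m n hmn W ρW) (ι n σ)).comp
          (I2 k m n hm1 hmn W ρW) := by
  apply ind_hom_ext
  intro τ w
  rw [LinearMap.comp_apply, LinearMap.comp_apply, indRep_mk_single, I2_mk, I2_mk,
    indRep_mk_single, map_mul, mul_assoc]

end Main4

end BranchAux


open BranchAux in
/-- Branching rule for restriction of induced modules: for a commutative ring `k` and a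
`k[S_m]`-module `W` (with `1 ≤ m ≤ n`), restricting the induced `S_{n+1}`-module
`Ind_{S_m × S_{n+1-m}}^{S_{n+1}}(W ⊠ k)` along the standard inclusion `S_n ⊆ S_{n+1}`
yields a natural isomorphism of `k[S_n]`-modules
`Res Ind_{S_m × S_{n+1-m}}^{S_{n+1}}(W ⊠ k)
  ≅ Ind_{S_m × S_{n-m}}^{S_n}(W ⊠ k) ⊕ Ind_{S_{m-1} × S_{n-m+1}}^{S_n}((Res W) ⊠ k)`. -/
theorem restriction_of_induced_decomposition
    (k : Type) [CommRing k] (m n : ℕ) (hm1 : 1 ≤ m) (hmn : m ≤ n)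
    (W : Type) [AddCommGroup W] [Module k W]
    (ρW : Representation k (Equiv.Perm (Fin m)) W) :
    ∃ e : IndCar k (young (n + 1) m)
            (ρW.comp (youngToBlock (n + 1) m (le_trans hmn (Nat.le_succ n)))) ≃ₗ[k]
          (IndCar k (young n m) (ρW.comp (youngToBlock n m hmn))) ×
          (IndCar k (young n (m - 1))
            ((ρW.comp (Equiv.Perm.viaEmbeddingHom (Fin.castLEEmb (Nat.sub_le m 1)))).comp
              (youngToBlock n (m - 1) (le_trans (Nat.sub_le m 1) hmn)))),
      ∀ (σ : Equiv.Perm (Fin n)) x,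
        e (indRep k (young (n + 1) m)
            (ρW.comp (youngToBlock (n + 1) m (le_trans hmn (Nat.le_succ n))))
            (Equiv.Perm.viaEmbeddingHom (Fin.castLEEmb (Nat.le_succ n)) σ) x)
          = (indRep k (young n m) (ρW.comp (youngToBlock n m hmn)) σ (e x).1,
             indRep k (young n (m - 1))
              ((ρW.comp (Equiv.Perm.viaEmbeddingHom (Fin.castLEEmb (Nat.sub_le m 1)))).comp
                (youngToBlock n (m - 1) (le_trans (Nat.sub_le m 1) hmn))) σ (e x).2) := by
  refine ⟨LinearEquiv.ofLinear (E k m n hm1 hmn W ρW)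
    (LinearMap.coprod (I1 k m n hmn W ρW) (I2 k m n hm1 hmn W ρW))
    ?_ ?_, ?_⟩
  · rw [LinearMap.comp_coprod, EI1, EI2, LinearMap.coprod_inl_inr]
  · exact IE k m n hm1 hmn W ρW
  · intro σ x
    have hισ : Equiv.Perm.viaEmbeddingHom (Fin.castLEEmb (Nat.le_succ n)) σ = ι n σ := rfl
    rw [hισ]
    simp only [LinearEquiv.ofLinear_apply]
    have hx : (LinearMap.coprod (I1 k m n hmn W ρW) (I2 k m n hm1 hmn W ρW))
        (E k m n hm1 hmn W ρW x) = x := by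
      have h := LinearMap.ext_iff.mp (IE k m n hm1 hmn W ρW) x
      rw [LinearMap.comp_apply, LinearMap.id_apply] at h
      exact h
    conv_lhs => rw [← hx]
    rw [LinearMap.coprod_apply, map_add, map_add]
    have h1 : indRep k (young (n+1) m) (ρtop k m n hmn W ρW) (ι n σ)
        ((I1 k m n hmn W ρW) (E k m n hm1 hmn W ρW x).1)
        = (I1 k m n hmn W ρW) (indRep k (young n m) (ρa k m n hmn W ρW) σ
            (E k m n hm1 hmn W ρW x).1) := by
      have h := LinearMap.ext_iff.mp (I1_equiv k m n hmn W ρW σ)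
        (E k m n hm1 hmn W ρW x).1
      rw [LinearMap.comp_apply, LinearMap.comp_apply] at h
      exact h.symm
    have h2 : indRep k (young (n+1) m) (ρtop k m n hmn W ρW) (ι n σ)
        ((I2 k m n hm1 hmn W ρW) (E k m n hm1 hmn W ρW x).2)
        = (I2 k m n hm1 hmn W ρW) (indRep k (young n (m-1)) (ρb k m n hmn W ρW) σ
            (E k m n hm1 hmn W ρW x).2) := by
      have h := LinearMap.ext_iff.mp (I2_equiv k m n hm1 hmn W ρW σ)
        (E k m n hm1 hmn W ρW x).2
      rw [LinearMap.comp_apply, LinearMap.comp_apply] at h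
      exact h.symm
    rw [h1, h2]
    have h3 : ∀ y, (E k m n hm1 hmn W ρW) ((I1 k m n hmn W ρW) y) = (y, 0) := by
      intro y
      have h := LinearMap.ext_iff.mp (EI1 k m n hm1 hmn W ρW) y
      rw [LinearMap.comp_apply, LinearMap.inl_apply] at h
      exact h
    have h4 : ∀ y, (E k m n hm1 hmn W ρW) ((I2 k m n hm1 hmn W ρW) y) = (0, y) := by
      intro y
      have h := LinearMap.ext_iff.mp (EI2 k m n hm1 hmn W ρW) y
      rw [LinearMap.comp_apply, LinearMap.inr_apply] at h
      exact h
    rw [h3, h4, Prod.mk_add_mk, add_zero, zero_add]
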